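/- Let K, u > 0, let X ~ N(0,K) and Z ~ N(0,u) be independent, and let X̂ = X + Z. Then for every nonnegative integer k, E[D^k γ_K(X) / γ_K(X) | X̂] = D^k γ_{K+u}(X̂) / γ_{K+u}(X̂) almost surely, where γ_V is the centered Gaussian density with variance V and D^k the k-th derivative. -/

import Mathlib

open MeasureTheory ProbabilityTheory

noncomputable def gaussDensity (V : ℝ) (x : ℝ) : ℝ :=
  (Real.sqrt (2 * Real.pi * V))⁻¹ * Real.exp (-x ^ 2 / (2 * V))

open Polynomial Real

noncomputable def hermPoly (V : ℝ) : ℕ → Polynomial ℝ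
  | 0 => 1
  | (k+1) => derivative (hermPoly V k) - Polynomial.C V⁻¹ * Polynomial.X * hermPoly V k

lemma gaussDensity_pos {V : ℝ} (hV : 0 < V) (x : ℝ) : 0 < gaussDensity V x := by
  unfold gaussDensity
  positivity

lemma continuous_gaussDensity (V : ℝ) : Continuous (gaussDensity V) := by
  unfold gaussDensity
  fun_prop

lemma hasDerivAt_gaussDensity {V : ℝ} (hV : V ≠ 0) (x : ℝ) :
    HasDerivAt (gaussDensity V) (-(x / V) * gaussDensity V x) x := by
  have h1 : HasDerivAt (fun x : ℝ => -x ^ 2 / (2 * V)) (-(2 * x) / (2 * V)) x := by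
    simpa using ((hasDerivAt_pow 2 x).neg.div_const (2 * V))
  have := (h1.exp.const_mul ((Real.sqrt (2 * Real.pi * V))⁻¹))
  have h2 := this.congr_deriv (g' := -(x / V) * gaussDensity V x) (by unfold gaussDensity; ring)
  exact h2

lemma hasDerivAt_poly_gauss {V : ℝ} (hV : V ≠ 0) (p : Polynomial ℝ) (x : ℝ) :
    HasDerivAt (fun x => aeval x p * gaussDensity V x)
      (aeval x (derivative p - Polynomial.C V⁻¹ * Polynomial.X * p) * gaussDensity V x) x := by
  have := (p.hasDerivAt_aeval x).mul (hasDerivAt_gaussDensity hV x)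
  have h2 := this.congr_deriv
    (g' := aeval x (derivative p - Polynomial.C V⁻¹ * Polynomial.X * p) * gaussDensity V x) (by
  simp only [map_sub, map_mul, aeval_C, aeval_X, Algebra.algebraMap_self, map_inv₀, RingHom.id_apply]
  field_simp
  ring)
  exact h2

lemma iteratedDeriv_gaussDensity {V : ℝ} (hV : 0 < V) (k : ℕ) :
    iteratedDeriv k (gaussDensity V) = fun x => aeval x (hermPoly V k) * gaussDensity V x := by
  induction k with
  | zero => funext x; simp [hermPoly]
  | succ k ih =>
      funext x
      rw [iteratedDeriv_succ, ih]
      exact (hasDerivAt_poly_gauss hV.ne' (hermPoly V k) x).deriv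

lemma integrable_pow_mul_exp {b : ℝ} (hb : 0 < b) (n : ℕ) :
    Integrable (fun x : ℝ => x ^ n * Real.exp (-b * x ^ 2)) := by
  have := integrable_rpow_mul_exp_neg_mul_sq hb (s := (n : ℝ))
    (lt_of_lt_of_le (by norm_num) (Nat.cast_nonneg _))
  simpa [Real.rpow_natCast] using this

lemma integrable_poly_mul_exp {b : ℝ} (hb : 0 < b) (p : Polynomial ℝ) :
    Integrable (fun x : ℝ => aeval x p * Real.exp (-b * x ^ 2)) := by
  induction p using Polynomial.induction_on' with
  | add p q hp hq => simpa [add_mul, Pi.add_def] using hp.add hq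
  | monomial n a =>
      simpa [aeval_monomial, mul_assoc] using (integrable_pow_mul_exp hb n).const_mul a

lemma integrable_poly_gauss {V : ℝ} (hV : 0 < V) (p : Polynomial ℝ) :
    Integrable (fun x : ℝ => aeval x p * gaussDensity V x) := by
  have hb : 0 < (2 * V)⁻¹ := by positivity
  have h := (integrable_poly_mul_exp hb p).const_mul ((Real.sqrt (2 * Real.pi * V))⁻¹)
  refine h.congr (Filter.Eventually.of_forall fun x => ?_)
  unfold gaussDensity
  show (Real.sqrt (2 * Real.pi * V))⁻¹ * (aeval x p * Real.exp (-(2 * V)⁻¹ * x ^ 2))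
      = aeval x p * ((Real.sqrt (2 * Real.pi * V))⁻¹ * Real.exp (-x ^ 2 / (2 * V)))
  have hx : -x ^ 2 / (2 * V) = -(2 * V)⁻¹ * x ^ 2 := by ring
  rw [hx]; ring

lemma integrable_poly_gauss_mul {V : ℝ} (hV : 0 < V) (p : Polynomial ℝ) {c : ℝ → ℝ}
    (hc : Continuous c) {C : ℝ} (hbd : ∀ x, |c x| ≤ C) :
    Integrable (fun x : ℝ => aeval x p * gaussDensity V x * c x) := by
  have h := (integrable_poly_gauss hV p).bdd_mul hc.aestronglyMeasurable (c := C)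
    (Filter.Eventually.of_forall fun x => by rw [Real.norm_eq_abs]; exact hbd x)
  refine h.congr (Filter.Eventually.of_forall fun x => by ring)

lemma gaussDensity_le {V : ℝ} (hV : 0 < V) (x : ℝ) :
    gaussDensity V x ≤ (Real.sqrt (2 * Real.pi * V))⁻¹ := by
  unfold gaussDensity
  have h1 : Real.exp (-x ^ 2 / (2 * V)) ≤ 1 := by
    rw [Real.exp_le_one_iff]
    have h0 : -x ^ 2 / (2 * V) = -(x ^ 2 / (2 * V)) := by ring
    have : 0 ≤ x ^ 2 / (2 * V) := by positivity
    linarith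
  have h2 : (0:ℝ) ≤ (Real.sqrt (2 * Real.pi * V))⁻¹ := by positivity
  calc (Real.sqrt (2 * Real.pi * V))⁻¹ * Real.exp (-x ^ 2 / (2 * V))
      ≤ (Real.sqrt (2 * Real.pi * V))⁻¹ * 1 := by nlinarith [Real.exp_pos (-x ^ 2 / (2 * V))]
    _ = _ := by ring

lemma abs_mul_gaussDensity_le {V : ℝ} (hV : 0 < V) (x : ℝ) :
    |x| * gaussDensity V x ≤ Real.sqrt (2 * V) * (Real.sqrt (2 * Real.pi * V))⁻¹ := by
  set s := x ^ 2 / (2 * V) with hs_def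
  have hs0 : 0 ≤ s := by positivity
  have h1 : |x| = Real.sqrt (2 * V) * Real.sqrt s := by
    rw [← Real.sqrt_mul (by positivity : (0:ℝ) ≤ 2 * V)]
    rw [show 2 * V * s = x ^ 2 by rw [hs_def]; field_simp]
    exact (Real.sqrt_sq_eq_abs x).symm
  have h2 : Real.sqrt s ≤ Real.exp (s / 2) := by
    rw [Real.exp_half]
    exact Real.sqrt_le_sqrt ((Real.add_one_le_exp s).trans' (by linarith))
  have h3 : gaussDensity V x = (Real.sqrt (2 * Real.pi * V))⁻¹ * Real.exp (-s) := by
    unfold gaussDensity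
    rw [hs_def, neg_div]
  have hc : (0:ℝ) ≤ (Real.sqrt (2 * Real.pi * V))⁻¹ := by positivity
  rw [h3, h1]
  have h4 : Real.sqrt s * Real.exp (-s) ≤ 1 := by
    calc Real.sqrt s * Real.exp (-s) ≤ Real.exp (s / 2) * Real.exp (-s) := by
          exact mul_le_mul_of_nonneg_right h2 (Real.exp_pos _).le
      _ = Real.exp (-(s / 2)) := by rw [← Real.exp_add]; ring_nf
      _ ≤ 1 := Real.exp_le_one_iff.mpr (by linarith)
  calc Real.sqrt (2 * V) * Real.sqrt s * ((Real.sqrt (2 * Real.pi * V))⁻¹ * Real.exp (-s))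
      = Real.sqrt (2 * V) * (Real.sqrt (2 * Real.pi * V))⁻¹ * (Real.sqrt s * Real.exp (-s)) := by
        ring
    _ ≤ Real.sqrt (2 * V) * (Real.sqrt (2 * Real.pi * V))⁻¹ * 1 := by
        have : (0:ℝ) ≤ Real.sqrt (2 * V) * (Real.sqrt (2 * Real.pi * V))⁻¹ := by positivity
        nlinarith [Real.sqrt_nonneg s, (Real.exp_pos (-s)).le]
    _ = _ := by ring

lemma gaussDensity_eq_pdf {V : ℝ} (hV : 0 ≤ V) (x : ℝ) :
    gaussDensity V x = gaussianPDFReal 0 ⟨V, hV⟩ x := by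
  simp [gaussDensity, gaussianPDFReal]
  rfl

lemma integral_gaussDensity {V : ℝ} (hV : 0 < V) : ∫ x, gaussDensity V x = 1 := by
  have hne : (⟨V, hV.le⟩ : NNReal) ≠ 0 := by
    intro h
    exact hV.ne' (congrArg Subtype.val h)
  rw [show (fun x => gaussDensity V x) = gaussianPDFReal 0 ⟨V, hV.le⟩ from
    funext (gaussDensity_eq_pdf hV.le)]
  exact integral_gaussianPDFReal_eq_one 0 hne

lemma gaussDensity_factor {K u : ℝ} (hK : 0 < K) (hu : 0 < u) (x y : ℝ) :
    gaussDensity K x * gaussDensity u (y - x)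
      = gaussDensity (K + u) y * gaussDensity (K * u / (K + u)) (x - K * y / (K + u)) := by
  unfold gaussDensity
  have hKu : 0 < K + u := by linarith
  have hconst : (Real.sqrt (2 * Real.pi * K))⁻¹ * (Real.sqrt (2 * Real.pi * u))⁻¹
      = (Real.sqrt (2 * Real.pi * (K + u)))⁻¹ *
        (Real.sqrt (2 * Real.pi * (K * u / (K + u))))⁻¹ := by
    rw [← mul_inv, ← mul_inv, ← Real.sqrt_mul (by positivity), ← Real.sqrt_mul (by positivity)]
    congr 1
    field_simp
  have hexp : Real.exp (-x ^ 2 / (2 * K)) * Real.exp (-(y - x) ^ 2 / (2 * u))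
      = Real.exp (-y ^ 2 / (2 * (K + u))) *
        Real.exp (-(x - K * y / (K + u)) ^ 2 / (2 * (K * u / (K + u)))) := by
    rw [← Real.exp_add, ← Real.exp_add]
    congr 1
    field_simp
    ring
  calc (Real.sqrt (2 * Real.pi * K))⁻¹ * Real.exp (-x ^ 2 / (2 * K)) *
        ((Real.sqrt (2 * Real.pi * u))⁻¹ * Real.exp (-(y - x) ^ 2 / (2 * u)))
      = ((Real.sqrt (2 * Real.pi * K))⁻¹ * (Real.sqrt (2 * Real.pi * u))⁻¹) *
        (Real.exp (-x ^ 2 / (2 * K)) * Real.exp (-(y - x) ^ 2 / (2 * u))) := by ring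
    _ = _ := by rw [hconst, hexp]; ring

lemma conv_gauss_base {K u : ℝ} (hK : 0 < K) (hu : 0 < u) (y : ℝ) :
    ∫ x, gaussDensity K x * gaussDensity u (y - x) = gaussDensity (K + u) y := by
  have hσ : 0 < K * u / (K + u) := by positivity
  rw [show (fun x => gaussDensity K x * gaussDensity u (y - x))
      = fun x => gaussDensity (K + u) y *
          gaussDensity (K * u / (K + u)) (x - K * y / (K + u)) from
    funext fun x => gaussDensity_factor hK hu x y]
  rw [integral_const_mul]
  rw [integral_sub_right_eq_self (fun x => gaussDensity (K * u / (K + u)) x) (K * y / (K + u))]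
  rw [integral_gaussDensity hσ, mul_one]

lemma conv_iteratedDeriv {K u : ℝ} (hK : 0 < K) (hu : 0 < u) (k : ℕ) (y : ℝ) :
    ∫ x, iteratedDeriv k (gaussDensity K) x * gaussDensity u (y - x)
      = iteratedDeriv k (gaussDensity (K + u)) y := by
  have hKu : 0 < K + u := by linarith
  induction k generalizing y with
  | zero => simpa [iteratedDeriv_zero] using conv_gauss_base hK hu y
  | succ k ih =>
    set p := hermPoly K k with hp
    have hstruct : iteratedDeriv k (gaussDensity K) = fun x => aeval x p * gaussDensity K x :=
      iteratedDeriv_gaussDensity hK k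
    have hstruct' : iteratedDeriv (k + 1) (gaussDensity K)
        = fun x => aeval x (derivative p - Polynomial.C K⁻¹ * Polynomial.X * p) *
            gaussDensity K x := by
      rw [iteratedDeriv_gaussDensity hK (k + 1)]
      rfl
    -- the global bound on t ↦ |t|/u * gaussDensity u t
    set C : ℝ := Real.sqrt (2 * u) * (Real.sqrt (2 * Real.pi * u))⁻¹ * u⁻¹ with hC
    have hCb : ∀ t : ℝ, |t / u * gaussDensity u t| ≤ C := by
      intro t
      rw [abs_mul, abs_of_pos (gaussDensity_pos hu t), abs_div, abs_of_pos hu, div_mul_eq_mul_div,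
        div_le_iff₀ hu, hC]
      have := abs_mul_gaussDensity_le hu t
      calc |t| * gaussDensity u t ≤ Real.sqrt (2 * u) * (Real.sqrt (2 * Real.pi * u))⁻¹ := this
        _ = Real.sqrt (2 * u) * (Real.sqrt (2 * Real.pi * u))⁻¹ * u⁻¹ * u := by
            field_simp
    -- derivative of t ↦ gaussDensity u (t - x)
    have hgd' : ∀ (t x : ℝ), HasDerivAt (fun t => gaussDensity u (t - x))
        (-((t - x) / u) * gaussDensity u (t - x)) t := by
      intro t x
      have h := (hasDerivAt_gaussDensity hu.ne' (t - x)).comp t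
        ((hasDerivAt_id t).sub_const x)
      rw [mul_one] at h
      exact h
    -- Step A : differentiation under the integral sign
    have hcont : Continuous (iteratedDeriv k (gaussDensity K)) := by
      rw [hstruct]
      exact (p.continuous_aeval).mul (continuous_gaussDensity K)
    have hintk : ∀ t : ℝ, Integrable (fun x => iteratedDeriv k (gaussDensity K) x *
        gaussDensity u (t - x)) := by
      intro t
      rw [hstruct]
      exact integrable_poly_gauss_mul hK p
        ((continuous_gaussDensity u).comp (continuous_const.sub continuous_id))
        (C := (Real.sqrt (2 * Real.pi * u))⁻¹)
        (fun x => by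
          rw [abs_of_pos (gaussDensity_pos hu _)]
          exact gaussDensity_le hu _)
    have key := hasDerivAt_integral_of_dominated_loc_of_deriv_le (μ := volume)
      (F := fun t x => iteratedDeriv k (gaussDensity K) x * gaussDensity u (t - x))
      (F' := fun t x => iteratedDeriv k (gaussDensity K) x *
        (-((t - x) / u) * gaussDensity u (t - x)))
      (x₀ := y) (s := Metric.ball y 1) (Metric.ball_mem_nhds y one_pos)
      (Filter.Eventually.of_forall fun t =>
        ((hcont.mul ((continuous_gaussDensity u).comp (continuous_const.sub
          continuous_id))).aestronglyMeasurable))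
      (hintk y)
      (by
        apply Continuous.aestronglyMeasurable
        have hc2 : Continuous fun x => -((y - x) / u) * gaussDensity u (y - x) :=
          (((continuous_const.sub continuous_id).div_const u).neg).mul
            ((continuous_gaussDensity u).comp (continuous_const.sub continuous_id))
        exact hcont.mul hc2)
      (bound := fun x => |iteratedDeriv k (gaussDensity K) x| * C)
      (Filter.Eventually.of_forall fun x => by
        intro t _
        rw [Real.norm_eq_abs, abs_mul]
        refine mul_le_mul_of_nonneg_left ?_ (abs_nonneg _)
        have := hCb (t - x)
        calc |(-((t - x) / u) * gaussDensity u (t - x))|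
            = |(t - x) / u * gaussDensity u (t - x)| := by rw [neg_mul, abs_neg]
          _ ≤ C := hCb (t - x))
      (by
        have : Integrable (fun x => iteratedDeriv k (gaussDensity K) x) := by
          rw [hstruct]; exact integrable_poly_gauss hK p
        exact this.abs.mul_const C)
      (Filter.Eventually.of_forall fun x => by
        intro t _
        exact (hgd' t x).const_mul (iteratedDeriv k (gaussDensity K) x))
    obtain ⟨-, hderiv⟩ := key
    -- identify the function being differentiated with iteratedDeriv k (gaussDensity (K+u))
    have hfun : (fun t => ∫ x, iteratedDeriv k (gaussDensity K) x * gaussDensity u (t - x))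
        = iteratedDeriv k (gaussDensity (K + u)) := funext fun t => ih t
    rw [hfun] at hderiv
    rw [show iteratedDeriv (k + 1) (gaussDensity (K + u)) y
        = deriv (iteratedDeriv k (gaussDensity (K + u))) y from by rw [iteratedDeriv_succ]]
    rw [hderiv.deriv]
    -- Step B : integration by parts
    have hUderiv : ∀ x : ℝ, HasDerivAt (fun x => aeval x p * gaussDensity K x)
        (aeval x (derivative p - Polynomial.C K⁻¹ * Polynomial.X * p) * gaussDensity K x) x :=
      fun x => hasDerivAt_poly_gauss hK.ne' p x
    have hVderiv : ∀ x : ℝ, HasDerivAt (fun x => gaussDensity u (y - x))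
        ((y - x) / u * gaussDensity u (y - x)) x := by
      intro x
      have h := (hasDerivAt_gaussDensity hu.ne' (y - x)).comp x
        ((hasDerivAt_const x y).sub (hasDerivAt_id x))
      have h2 := h.congr_deriv (g' := (y - x) / u * gaussDensity u (y - x)) (by ring)
      exact h2
    have hIuv' : Integrable (fun x => aeval x p * gaussDensity K x *
        ((y - x) / u * gaussDensity u (y - x))) :=
      integrable_poly_gauss_mul hK p
        ((((continuous_const.sub continuous_id).div_const u)).mul
          ((continuous_gaussDensity u).comp (continuous_const.sub continuous_id)))
        (C := C) (fun x => hCb (y - x))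
    have hIu'v : Integrable (fun x =>
        aeval x (derivative p - Polynomial.C K⁻¹ * Polynomial.X * p) * gaussDensity K x *
        gaussDensity u (y - x)) :=
      integrable_poly_gauss_mul hK _
        ((continuous_gaussDensity u).comp (continuous_const.sub continuous_id))
        (C := (Real.sqrt (2 * Real.pi * u))⁻¹)
        (fun x => by
          rw [abs_of_pos (gaussDensity_pos hu _)]
          exact gaussDensity_le hu _)
    have hIuv : Integrable (fun x => aeval x p * gaussDensity K x * gaussDensity u (y - x)) :=
      integrable_poly_gauss_mul hK p
        ((continuous_gaussDensity u).comp (continuous_const.sub continuous_id))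
        (C := (Real.sqrt (2 * Real.pi * u))⁻¹)
        (fun x => by
          rw [abs_of_pos (gaussDensity_pos hu _)]
          exact gaussDensity_le hu _)
    have hparts := integral_mul_deriv_eq_deriv_mul_of_integrable (fun x _ => hUderiv x) (fun x _ => hVderiv x)
      (by simpa [Pi.mul_def] using hIuv') (by simpa [Pi.mul_def] using hIu'v)
      (by simpa [Pi.mul_def] using hIuv)
    -- conclude
    rw [hstruct, hstruct']
    refine Eq.symm ?_
    calc ∫ x, aeval x p * gaussDensity K x * (-((y - x) / u) * gaussDensity u (y - x))
        = -∫ x, aeval x p * gaussDensity K x * ((y - x) / u * gaussDensity u (y - x)) := by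
          rw [← integral_neg]
          congr 1
          funext x
          ring
      _ = ∫ x, aeval x (derivative p - Polynomial.C K⁻¹ * Polynomial.X * p) * gaussDensity K x *
            gaussDensity u (y - x) := by
          rw [hparts]
          simp

lemma gaussianReal_withDensity {V : ℝ} (hV : 0 < V) :
    gaussianReal 0 ⟨V, hV.le⟩
      = volume.withDensity fun y => ((Real.toNNReal (gaussDensity V y) : NNReal) : ENNReal) := by
  have hne : (⟨V, hV.le⟩ : NNReal) ≠ 0 := fun h => hV.ne' (congrArg Subtype.val h)
  rw [gaussianReal_of_var_ne_zero _ hne]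
  congr 1
  funext y
  show ENNReal.ofReal (gaussianPDFReal 0 ⟨V, hV.le⟩ y) = _
  rw [← gaussDensity_eq_pdf hV.le]
  rfl

lemma setIntegral_gaussianReal {V : ℝ} (hV : 0 < V) {s : Set ℝ} (hs : MeasurableSet s)
    (g : ℝ → ℝ) :
    ∫ y in s, g y ∂(gaussianReal 0 ⟨V, hV.le⟩) = ∫ y in s, gaussDensity V y * g y := by
  rw [gaussianReal_withDensity hV, restrict_withDensity hs,
    integral_withDensity_eq_integral_smul
      (by exact (continuous_gaussDensity V).measurable.real_toNNReal) g]
  refine setIntegral_congr_fun hs fun y _ => ?_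
  rw [NNReal.smul_def, Real.coe_toNNReal _ (gaussDensity_pos hV y).le, smul_eq_mul]

lemma integral_gaussianReal {V : ℝ} (hV : 0 < V) (g : ℝ → ℝ) :
    ∫ y, g y ∂(gaussianReal 0 ⟨V, hV.le⟩) = ∫ y, gaussDensity V y * g y := by
  simpa using setIntegral_gaussianReal hV MeasurableSet.univ g

lemma integrable_gaussianReal_iff {V : ℝ} (hV : 0 < V) (g : ℝ → ℝ) :
    Integrable g (gaussianReal 0 ⟨V, hV.le⟩)
      ↔ Integrable (fun y => gaussDensity V y * g y) volume := by
  rw [gaussianReal_withDensity hV,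
    integrable_withDensity_iff_integrable_smul
      (by exact (continuous_gaussDensity V).measurable.real_toNNReal)]
  constructor <;> intro h <;> refine h.congr (Filter.Eventually.of_forall fun y => ?_) <;>
    simp only [NNReal.smul_def, Real.coe_toNNReal _ (gaussDensity_pos hV y).le, smul_eq_mul]

lemma gaussDensity_shift {u : ℝ} (hu : 0 ≤ u) (x y : ℝ) :
    gaussDensity u (y - x) = gaussianPDFReal x ⟨u, hu⟩ y := by
  simp [gaussDensity, gaussianPDFReal]
  rfl

lemma integrable_gaussDensity_shift {u : ℝ} (hu : 0 < u) (x : ℝ) :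
    Integrable (fun y => gaussDensity u (y - x)) := by
  refine (integrable_gaussianPDFReal x ⟨u, hu.le⟩).congr
    (Filter.Eventually.of_forall fun y => ?_)
  rw [← gaussDensity_shift hu.le]

lemma setIntegral_gaussDensity_shift_le_one {u : ℝ} (hu : 0 < u) (x : ℝ) {B : Set ℝ} :
    ∫ y in B, gaussDensity u (y - x) ≤ 1 := by
  have h1 : ∫ y, gaussDensity u (y - x) = 1 := by
    rw [integral_sub_right_eq_self (fun y => gaussDensity u y) x]
    exact integral_gaussDensity hu
  calc ∫ y in B, gaussDensity u (y - x)
      ≤ ∫ y, gaussDensity u (y - x) :=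
        setIntegral_le_integral (integrable_gaussDensity_shift hu x)
          (Filter.Eventually.of_forall fun y => (gaussDensity_pos hu _).le)
    _ = 1 := h1

lemma integrable_gauss_abs_poly {V : ℝ} (hV : 0 < V) (p : Polynomial ℝ) :
    Integrable (fun x : ℝ => gaussDensity V x * |aeval x p|) := by
  refine (integrable_poly_gauss hV p).abs.congr (Filter.Eventually.of_forall fun x => ?_)
  show |aeval x p * gaussDensity V x| = gaussDensity V x * |aeval x p|
  rw [abs_mul, abs_of_pos (gaussDensity_pos hV x), mul_comm]

set_option maxHeartbeats 1000000 in
lemma key_setIntegral {K u : ℝ} (hK : 0 < K) (hu : 0 < u) (k : ℕ) {B : Set ℝ}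
    (hB : MeasurableSet B) :
    ∫ pr in (fun pr : ℝ × ℝ => pr.1 + pr.2) ⁻¹' B, aeval pr.1 (hermPoly K k)
        ∂((gaussianReal 0 ⟨K, hK.le⟩).prod (gaussianReal 0 ⟨u, hu.le⟩))
      = ∫ y in B, aeval y (hermPoly (K + u) k) * gaussDensity (K + u) y := by
  classical
  have hKu : (0:ℝ) < K + u := by linarith
  set p := hermPoly K k with hp
  set q := hermPoly (K + u) k with hq
  set PK := gaussianReal 0 (⟨K, hK.le⟩ : NNReal) with hPK
  set Pu := gaussianReal 0 (⟨u, hu.le⟩ : NNReal) with hPu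
  haveI : IsProbabilityMeasure PK := instIsProbabilityMeasureGaussianReal 0 _
  haveI : IsProbabilityMeasure Pu := instIsProbabilityMeasureGaussianReal 0 _
  have hune : (⟨u, hu.le⟩ : NNReal) ≠ 0 := fun h => hu.ne' (congrArg Subtype.val h)
  set T : Set (ℝ × ℝ) := (fun pr : ℝ × ℝ => pr.1 + pr.2) ⁻¹' B with hT
  have hTmeas : MeasurableSet T := (measurable_fst.add measurable_snd) hB
  set F : ℝ × ℝ → ℝ := T.indicator (fun pr => aeval pr.1 p) with hF
  have hFmeas : Measurable F :=
    ((p.continuous_aeval.measurable).comp measurable_fst).indicator hTmeas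
  -- slice integrability
  have hslice : ∀ x : ℝ, Integrable (fun z => F (x, z)) Pu := by
    intro x
    refine (integrable_const |aeval x p|).mono'
      ((hFmeas.comp (measurable_const.prodMk measurable_id)).aestronglyMeasurable)
      (Filter.Eventually.of_forall fun z => ?_)
    rw [Real.norm_eq_abs, hF]
    rcases Set.indicator_eq_zero_or_self T (fun pr : ℝ × ℝ => aeval pr.1 p) (x, z) with h | h
    · rw [h]; simp [abs_nonneg]
    · rw [h]
  have hFint : Integrable F (PK.prod Pu) := by
    rw [integrable_prod_iff hFmeas.aestronglyMeasurable]
    refine ⟨Filter.Eventually.of_forall hslice, ?_⟩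
    refine (((integrable_gaussianReal_iff hK (fun x => |aeval x p|)).mpr
      (integrable_gauss_abs_poly hK p))).mono'
      (hFmeas.stronglyMeasurable.aestronglyMeasurable.norm.integral_prod_right')
      (Filter.Eventually.of_forall fun x => ?_)
    rw [Real.norm_eq_abs, abs_of_nonneg (integral_nonneg fun z => norm_nonneg _)]
    calc ∫ z, ‖F (x, z)‖ ∂Pu ≤ ∫ _, |aeval x p| ∂Pu := by
          refine integral_mono (hslice x).norm (integrable_const _) fun z => ?_
          rw [Real.norm_eq_abs, hF]
          rcases Set.indicator_eq_zero_or_self T (fun pr : ℝ × ℝ => aeval pr.1 p) (x, z)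
            with h | h
          · rw [h]; simp [abs_nonneg]
          · rw [h]
      _ = |aeval x p| := by simp
  -- step 1 : set integral to indicator integral, then Fubini on the product of Gaussians
  rw [← integral_indicator hTmeas]
  rw [show (fun pr : ℝ × ℝ => T.indicator (fun pr : ℝ × ℝ => aeval pr.1 p) pr) = F from rfl]
  rw [integral_prod F hFint]
  -- step 2 : compute the inner integral
  have hinner : ∀ x : ℝ, ∫ z, F (x, z) ∂Pu
      = aeval x p * ∫ y in B, gaussDensity u (y - x) := by
    intro x
    have h1 : ∀ z : ℝ, F (x, z) = B.indicator (fun _ => aeval x p) (x + z) := by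
      intro z
      rw [hF, Set.indicator_apply, Set.indicator_apply]
      rfl
    simp_rw [h1]
    have hmap : Pu.map (x + ·) = gaussianReal x ⟨u, hu.le⟩ := by
      rw [hPu]
      have h := gaussianReal_map_const_add (μ := 0) (v := ⟨u, hu.le⟩) x
      rw [zero_add] at h
      exact h
    have h2 : ∫ z, B.indicator (fun _ => aeval x p) (x + z) ∂Pu
        = ∫ w, B.indicator (fun _ => aeval x p) w ∂(Pu.map (x + ·)) := by
      rw [integral_map (measurable_const_add x).aemeasurable]
      exact ((stronglyMeasurable_const.indicator hB).aestronglyMeasurable)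
    rw [h2, hmap, integral_indicator_const _ hB]
    have h3 : (gaussianReal x ⟨u, hu.le⟩ B).toReal = ∫ y in B, gaussDensity u (y - x) := by
      rw [gaussianReal_apply_eq_integral x hune B,
        ENNReal.toReal_ofReal (integral_nonneg fun y => gaussianPDFReal_nonneg x ⟨u, hu.le⟩ y)]
      exact setIntegral_congr_fun hB fun y _ => (gaussDensity_shift hu.le x y).symm
    rw [measureReal_def, h3, smul_eq_mul, mul_comm]
  simp_rw [hinner]
  -- step 3 : outer integral to Lebesgue
  rw [hPK, integral_gaussianReal hK]
  -- step 4 : Fubini on volume × (volume restricted to B)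
  have hswap : ∫ x, gaussDensity K x * (aeval x p * ∫ y in B, gaussDensity u (y - x))
      = ∫ y in B, ∫ x, aeval x p * gaussDensity K x * gaussDensity u (y - x) := by
    have hcont : Continuous fun pr : ℝ × ℝ =>
        aeval pr.1 p * gaussDensity K pr.1 * gaussDensity u (pr.2 - pr.1) :=
      ((p.continuous_aeval.comp continuous_fst).mul
        ((continuous_gaussDensity K).comp continuous_fst)).mul
        ((continuous_gaussDensity u).comp (continuous_snd.sub continuous_fst))
    have hGasm : AEStronglyMeasurable (Function.uncurry fun x y =>
        aeval x p * gaussDensity K x * gaussDensity u (y - x))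
        (volume.prod (volume.restrict B)) := hcont.aestronglyMeasurable
    have hintun : Integrable (Function.uncurry fun x y =>
        aeval x p * gaussDensity K x * gaussDensity u (y - x))
        (volume.prod (volume.restrict B)) := by
      rw [integrable_prod_iff hGasm]
      refine ⟨Filter.Eventually.of_forall fun x => ?_, ?_⟩
      · exact (((integrable_gaussDensity_shift hu x).const_mul
          (aeval x p * gaussDensity K x)).restrict)
      · refine ((integrable_poly_gauss hK p).abs).mono'
          (hGasm.norm.integral_prod_right')
          (Filter.Eventually.of_forall fun x => ?_)
        simp only [Function.uncurry_apply_pair]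
        rw [Real.norm_eq_abs, abs_of_nonneg (integral_nonneg fun y => norm_nonneg _)]
        have heq : ∀ y : ℝ, ‖aeval x p * gaussDensity K x * gaussDensity u (y - x)‖
            = |aeval x p * gaussDensity K x| * gaussDensity u (y - x) := by
          intro y
          rw [Real.norm_eq_abs, abs_mul, abs_of_pos (gaussDensity_pos hu _)]
        simp_rw [heq]
        rw [integral_const_mul]
        calc |aeval x p * gaussDensity K x| * ∫ y in B, gaussDensity u (y - x)
            ≤ |aeval x p * gaussDensity K x| * 1 :=
              mul_le_mul_of_nonneg_left (setIntegral_gaussDensity_shift_le_one hu x)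
                (abs_nonneg _)
          _ = |aeval x p * gaussDensity K x| := mul_one _
    have := integral_integral_swap hintun
    calc ∫ x, gaussDensity K x * (aeval x p * ∫ y in B, gaussDensity u (y - x))
        = ∫ x, ∫ y in B, aeval x p * gaussDensity K x * gaussDensity u (y - x) := by
          refine integral_congr_ae (Filter.Eventually.of_forall fun x => ?_)
          show gaussDensity K x * (aeval x p * ∫ y in B, gaussDensity u (y - x))
              = ∫ y in B, aeval x p * gaussDensity K x * gaussDensity u (y - x)
          rw [integral_const_mul]
          ring
      _ = _ := this
  rw [hswap]
  -- step 5 : the convolution identity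
  refine setIntegral_congr_fun hB fun y _ => ?_
  have h1 := conv_iteratedDeriv hK hu k y
  rw [iteratedDeriv_gaussDensity hK k, iteratedDeriv_gaussDensity hKu k] at h1
  exact h1

lemma integrable_gauss_poly {V : ℝ} (hV : 0 < V) (p : Polynomial ℝ) :
    Integrable (fun x : ℝ => gaussDensity V x * aeval x p) :=
  (integrable_poly_gauss hV p).congr (Filter.Eventually.of_forall fun x => mul_comm _ _)

lemma law_sum_gauss {Ω : Type*} [m0 : MeasurableSpace Ω] (μ : Measure Ω) [IsProbabilityMeasure μ]
    {K u : ℝ} (hK : 0 < K) (hu : 0 < u)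
    {X Z : Ω → ℝ} (hX : Measurable X) (hZ : Measurable Z)
    (hprod : μ.map (fun ω => (X ω, Z ω))
      = (gaussianReal 0 ⟨K, hK.le⟩).prod (gaussianReal 0 ⟨u, hu.le⟩)) :
    μ.map (fun ω => X ω + Z ω) = gaussianReal 0 ⟨K + u, by positivity⟩ := by
  have hKu : (0:ℝ) < K + u := by linarith
  set PK := gaussianReal 0 (⟨K, hK.le⟩ : NNReal)
  set Pu := gaussianReal 0 (⟨u, hu.le⟩ : NNReal)
  haveI : IsProbabilityMeasure PK := instIsProbabilityMeasureGaussianReal 0 _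
  haveI : IsProbabilityMeasure Pu := instIsProbabilityMeasureGaussianReal 0 _
  haveI : IsProbabilityMeasure (gaussianReal 0 (⟨K + u, hKu.le⟩ : NNReal)) :=
    instIsProbabilityMeasureGaussianReal 0 _
  have hadd : Measurable fun pr : ℝ × ℝ => pr.1 + pr.2 := measurable_fst.add measurable_snd
  have hmm : μ.map (fun ω => X ω + Z ω) = (PK.prod Pu).map (fun pr => pr.1 + pr.2) := by
    rw [← hprod, Measure.map_map hadd (hX.prodMk hZ)]
    rfl
  rw [hmm]
  ext s hs
  rw [Measure.map_apply hadd hs]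
  have h1 : ((PK.prod Pu) ((fun pr : ℝ × ℝ => pr.1 + pr.2) ⁻¹' s)).toReal
      = ∫ y in s, gaussDensity (K + u) y := by
    have h2 := key_setIntegral hK hu 0 hs
    simp only [hermPoly, map_one, one_mul] at h2
    rw [← h2, setIntegral_const, smul_eq_mul, mul_one, measureReal_def]
  have h3 : (gaussianReal 0 (⟨K + u, hKu.le⟩ : NNReal) s).toReal
      = ∫ y in s, gaussDensity (K + u) y := by
    rw [gaussianReal_apply_eq_integral 0 (v := ⟨K + u, hKu.le⟩) (fun h => hKu.ne' (congrArg Subtype.val h)) s,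
      ENNReal.toReal_ofReal (integral_nonneg fun y => gaussianPDFReal_nonneg 0 ⟨K + u, hKu.le⟩ y)]
    exact setIntegral_congr_fun hs fun y _ => (gaussDensity_eq_pdf hKu.le y).symm
  refine (ENNReal.toReal_eq_toReal_iff' (measure_ne_top _ _) (measure_ne_top _ _)).mp ?_
  rw [h1, h3]

theorem stmt_11 {Ω : Type*} [m0 : MeasurableSpace Ω] (μ : Measure Ω) [IsProbabilityMeasure μ]
    (K u : ℝ) (hK : 0 < K) (hu : 0 < u)
    (X Z : Ω → ℝ) (hX : Measurable X) (hZ : Measurable Z)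
    (hind : IndepFun X Z μ)
    (hXlaw : μ.map X = gaussianReal 0 ⟨K, hK.le⟩)
    (hZlaw : μ.map Z = gaussianReal 0 ⟨u, hu.le⟩)
    (k : ℕ) :
    μ[fun ω => iteratedDeriv k (gaussDensity K) (X ω) / gaussDensity K (X ω) |
        MeasurableSpace.comap (fun ω => X ω + Z ω) (borel ℝ)]
      =ᵐ[μ] fun ω =>
        iteratedDeriv k (gaussDensity (K + u)) (X ω + Z ω) / gaussDensity (K + u) (X ω + Z ω) := by
  classical
  have hKu : (0:ℝ) < K + u := by linarith
  set p := hermPoly K k with hp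
  set q := hermPoly (K + u) k with hq
  have hY : Measurable fun ω => X ω + Z ω := hX.add hZ
  have hfeq : (fun ω => iteratedDeriv k (gaussDensity K) (X ω) / gaussDensity K (X ω))
      = fun ω => aeval (X ω) p := by
    funext ω
    rw [iteratedDeriv_gaussDensity hK k]
    exact mul_div_cancel_right₀ _ (gaussDensity_pos hK _).ne'
  have hgeq : (fun ω => iteratedDeriv k (gaussDensity (K + u)) (X ω + Z ω) /
        gaussDensity (K + u) (X ω + Z ω))
      = fun ω => aeval (X ω + Z ω) q := by
    funext ω
    rw [iteratedDeriv_gaussDensity hKu k]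
    exact mul_div_cancel_right₀ _ (gaussDensity_pos hKu _).ne'
  rw [hfeq, hgeq, ← BorelSpace.measurable_eq (α := ℝ)]
  have hprod : μ.map (fun ω => (X ω, Z ω))
      = (gaussianReal 0 ⟨K, hK.le⟩).prod (gaussianReal 0 ⟨u, hu.le⟩) := by
    rw [(indepFun_iff_map_prod_eq_prod_map_map hX.aemeasurable hZ.aemeasurable).mp hind,
      hXlaw, hZlaw]
  have hmapY : μ.map (fun ω => X ω + Z ω) = gaussianReal 0 ⟨K + u, hKu.le⟩ :=
    law_sum_gauss μ hK hu hX hZ hprod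
  have hfint : Integrable (fun ω => aeval (X ω) p) μ := by
    have h1 : Integrable (fun x => aeval x p) (μ.map X) := by
      rw [hXlaw]
      exact (integrable_gaussianReal_iff hK _).mpr (integrable_gauss_poly hK p)
    exact (integrable_map_measure (p.continuous_aeval.aestronglyMeasurable)
      hX.aemeasurable).mp h1
  have hgint : Integrable (fun ω => aeval (X ω + Z ω) q) μ := by
    have h1 : Integrable (fun y => aeval y q) (μ.map fun ω => X ω + Z ω) := by
      rw [hmapY]
      exact (integrable_gaussianReal_iff hKu _).mpr (integrable_gauss_poly hKu q)
    exact (integrable_map_measure (q.continuous_aeval.aestronglyMeasurable)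
      hY.aemeasurable).mp h1
  refine (ae_eq_condExp_of_forall_setIntegral_eq hY.comap_le hfint
    (fun s _ _ => hgint.integrableOn) ?_ ?_).symm
  · -- set integral equality
    rintro s ⟨B, hB, rfl⟩ -
    have hLHS : ∫ ω in (fun ω => X ω + Z ω) ⁻¹' B, aeval (X ω + Z ω) q ∂μ
        = ∫ y in B, gaussDensity (K + u) y * aeval y q := by
      rw [← setIntegral_map hB (q.continuous_aeval.aestronglyMeasurable) hY.aemeasurable,
        hmapY, setIntegral_gaussianReal hKu hB]
    have hRHS : ∫ ω in (fun ω => X ω + Z ω) ⁻¹' B, aeval (X ω) p ∂μ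
        = ∫ y in B, aeval y q * gaussDensity (K + u) y := by
      have hTmeas : MeasurableSet ((fun pr : ℝ × ℝ => pr.1 + pr.2) ⁻¹' B) :=
        (measurable_fst.add measurable_snd) hB
      have h2 : ∫ pr in (fun pr : ℝ × ℝ => pr.1 + pr.2) ⁻¹' B, aeval pr.1 p
            ∂(μ.map fun ω => (X ω, Z ω))
          = ∫ ω in (fun ω => X ω + Z ω) ⁻¹' B, aeval (X ω) p ∂μ := by
        have hasm : AEStronglyMeasurable (fun pr : ℝ × ℝ => aeval pr.1 p)
            (Measure.map (fun ω => (X ω, Z ω)) μ) := by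
          exact (p.continuous_aeval.comp continuous_fst).aestronglyMeasurable
        rw [setIntegral_map hTmeas hasm (hX.prodMk hZ).aemeasurable]
        rfl
      rw [← h2, hprod]
      exact key_setIntegral hK hu k hB
    rw [hLHS, hRHS]
    exact setIntegral_congr_fun hB fun y _ => mul_comm _ _
  · -- strong measurability w.r.t. the comap σ-algebra
    have hYm : @Measurable Ω ℝ
        (MeasurableSpace.comap (fun ω => X ω + Z ω) inferInstance) _
        (fun ω => X ω + Z ω) := Measurable.of_comap_le le_rfl
    exact StronglyMeasurable.aestronglyMeasurable
      (Measurable.stronglyMeasurable (q.continuous_aeval.measurable.comp hYm))
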